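/- arXiv:2409.09015 — 3 statements merged into one kernel-verified Lean document; each statement's English description precedes it below -/
import Mathlib

section
/- For any set I and any chain {0, e, 1} with 0 < e < 1 made into the p-algebra B̄₁ (with 0* = 1, e* = 1* = 0), and any pair of fields of subsets B₀ ⊆ B ⊆ 𝒫(I) (each a Boolean subalgebra of the powerset), the set P(B, B₀) = {f ∈ {0,e,1}^I : f⁻¹(0) ∈ B₀ and f⁻¹(1) ∈ B} is a subuniverse of the product p-algebra B̄₁^I (closed under coordinatewise meet, join, pseudo-complement, and containing the constant functions 0 and 1). -/
/-- Pseudo-complement on the three-element chain `B̄₁` (`0 ↦ 0`, `e ↦ 1`, `1 ↦ 2`). -/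
def b1star : Fin 3 → Fin 3 := fun x => if x = 0 then 2 else 0

/-- A field of subsets of `I`: contains `∅` and `I`, closed under
complements, intersections and unions. -/
def IsFieldOfSets {I : Type*} (B : Set (Set I)) : Prop :=
  ∅ ∈ B ∧ Set.univ ∈ B ∧ (∀ X ∈ B, Xᶜ ∈ B) ∧
    (∀ X ∈ B, ∀ Y ∈ B, X ∩ Y ∈ B) ∧ (∀ X ∈ B, ∀ Y ∈ B, X ∪ Y ∈ B)

/-- `P(B, B₀) = {f ∈ {0,e,1}^I : f⁻¹(0) ∈ B₀, f⁻¹(1) ∈ B}`. -/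
def PBB {I : Type*} (B B₀ : Set (Set I)) : Set (I → Fin 3) :=
  {f | f ⁻¹' {0} ∈ B₀ ∧ f ⁻¹' {2} ∈ B}

lemma min0 : ∀ a b : Fin 3, min a b = 0 ↔ a = 0 ∨ b = 0 := by decide
lemma min2 : ∀ a b : Fin 3, min a b = 2 ↔ a = 2 ∧ b = 2 := by decide
lemma max0 : ∀ a b : Fin 3, max a b = 0 ↔ a = 0 ∧ b = 0 := by decide
lemma max2 : ∀ a b : Fin 3, max a b = 2 ↔ a = 2 ∨ b = 2 := by decide
lemma star0 : ∀ a : Fin 3, b1star a = 0 ↔ ¬ a = 0 := by decide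
lemma star2 : ∀ a : Fin 3, b1star a = 2 ↔ a = 0 := by decide

theorem stmt3 {I : Type*} (B B₀ : Set (Set I))
    (hB : IsFieldOfSets B) (hB₀ : IsFieldOfSets B₀) (hsub : B₀ ⊆ B) :
    (fun _ => (0 : Fin 3)) ∈ PBB B B₀ ∧
    (fun _ => (2 : Fin 3)) ∈ PBB B B₀ ∧
    (∀ f ∈ PBB B B₀, ∀ g ∈ PBB B B₀, (fun i => min (f i) (g i)) ∈ PBB B B₀) ∧
    (∀ f ∈ PBB B B₀, ∀ g ∈ PBB B B₀, (fun i => max (f i) (g i)) ∈ PBB B B₀) ∧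
    (∀ f ∈ PBB B B₀, (fun i => b1star (f i)) ∈ PBB B B₀) := by
  obtain ⟨hBe, hBu, hBc, hBi, hBj⟩ := hB
  obtain ⟨h0e, h0u, h0c, h0i, h0j⟩ := hB₀
  refine ⟨⟨?_, ?_⟩, ⟨?_, ?_⟩, ?_, ?_, ?_⟩
  · convert h0u using 1; ext i; simp
  · convert hBe using 1; ext i; simp
  · convert h0e using 1; ext i; simp
  · convert hBu using 1; ext i; simp
  · rintro f ⟨hf0, hf2⟩ g ⟨hg0, hg2⟩
    constructor
    · convert h0j _ hf0 _ hg0 using 1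
      ext i; simp [Set.preimage, min0]
    · convert hBi _ hf2 _ hg2 using 1
      ext i; simp [Set.preimage, min2]
  · rintro f ⟨hf0, hf2⟩ g ⟨hg0, hg2⟩
    constructor
    · convert h0i _ hf0 _ hg0 using 1
      ext i; simp [Set.preimage, max0]
    · convert hBj _ hf2 _ hg2 using 1
      ext i; simp [Set.preimage, max2]
  · rintro f ⟨hf0, hf2⟩
    constructor
    · convert h0c _ hf0 using 1
      ext i; simp [Set.preimage, star0]
    · convert hsub hf0 using 1
      ext i; simp [Set.preimage, star2]
end

section
/- Let G = (V, E) be a finite graph and P_G the poset {∅} ∪ {{v} : v ∈ V} ∪ E ordered by reverse inclusion. For distinct vertices u, v ∈ V, the pair {u, v} is an edge of G if and only if in the lattice Up(P_G) there exists a unique join-irreducible element strictly above both ↑{u} and ↑{v}. -/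
/-- The universe of the poset `P_G = {∅} ∪ {{v} : v ∈ V} ∪ E`. -/
def PGuniv (V : Type*) (E : Set (Set V)) :=
  {S : Set V // S = ∅ ∨ (∃ v, S = {v}) ∨ S ∈ E}

/-- `P_G` ordered by reverse inclusion. -/
instance (V : Type*) (E : Set (Set V)) : PartialOrder (PGuniv V E) where
  le S T := T.1 ⊆ S.1
  le_refl _ := Set.Subset.refl _
  le_trans _ _ _ h1 h2 := Set.Subset.trans h2 h1
  le_antisymm _ _ h1 h2 := Subtype.ext (Set.Subset.antisymm h2 h1)

/-- The top element `∅` of `P_G`. -/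
def topEl (V : Type*) (E : Set (Set V)) : PGuniv V E := ⟨∅, Or.inl rfl⟩

/-- The element `{v}` of `P_G` for a vertex `v`. -/
def vtx {V : Type*} (E : Set (Set V)) (v : V) : PGuniv V E :=
  ⟨{v}, Or.inr (Or.inl ⟨v, rfl⟩)⟩

/-- Join-irreducibility in the lattice of upsets of `P_G`. -/
def JoinIrrUp {V : Type*} (E : Set (Set V)) (X : Set (PGuniv V E)) : Prop :=
  X ≠ ∅ ∧ ∀ A B : Set (PGuniv V E), IsUpperSet A → IsUpperSet B →
    X = A ∪ B → X = A ∨ X = B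

section Aux
variable {V : Type*} [Fintype V] {E : Set (Set V)}

lemma pg_joinirr_principal (X : Set (PGuniv V E)) (hX : IsUpperSet X)
    (hJ : JoinIrrUp E X) : ∃ p ∈ X, X = Set.Ici p := by
  have hfin : Finite (PGuniv V E) := Subtype.finite
  obtain ⟨hne, hsplit⟩ := hJ
  have hX' : X.Nonempty := Set.nonempty_iff_ne_empty.mpr hne
  have hwf := Finite.to_wellFoundedLT (α := PGuniv V E)
  obtain ⟨p, hpX, hmin⟩ := hwf.wf.has_min X hX'
  refine ⟨p, hpX, ?_⟩
  have hA : Set.Ici p ⊆ X := fun q hq => hX hq hpX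
  have hB : IsUpperSet (X \ {p}) := by
    intro a b hab hm
    obtain ⟨haX, hap⟩ := hm
    refine ⟨hX hab haX, ?_⟩
    intro hb
    have hbp : b = p := hb
    subst hbp
    exact hmin a haX (lt_of_le_of_ne hab (fun h => hap (by simp [h])))
  have hcup : X = Set.Ici p ∪ (X \ {p}) := by
    apply Set.Subset.antisymm
    · intro x hx
      by_cases h : x = p
      · exact Or.inl (h ▸ Set.self_mem_Ici)
      · exact Or.inr ⟨hx, h⟩
    · rintro x (h | h)
      exacts [hA h, h.1]
  rcases hsplit _ _ (isUpperSet_Ici p) hB hcup with h | h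
  · exact h
  · have : p ∈ X \ {p} := h ▸ hpX
    exact absurd rfl this.2

lemma pg_char (hE : ∀ s ∈ E, ∃ u v : V, u ≠ v ∧ s = {u, v})
    {u v : V} (huv : u ≠ v) (X : Set (PGuniv V E)) (hX : IsUpperSet X)
    (hJ : JoinIrrUp E X) (hu : vtx E u ∈ X) (hv : vtx E v ∈ X) :
    ∃ p : PGuniv V E, p.1 = {u, v} ∧ p.1 ∈ E ∧ X = Set.Ici p := by
  obtain ⟨p, hpX, rfl⟩ := pg_joinirr_principal X hX hJ
  have hup : u ∈ p.1 := (Set.mem_Ici.mp hu) (by simp [vtx])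
  have hvp : v ∈ p.1 := (Set.mem_Ici.mp hv) (by simp [vtx])
  have hpE : p.1 ∈ E := by
    rcases p.2 with h | ⟨w, h⟩ | h
    · rw [h] at hup; exact absurd hup (Set.notMem_empty u)
    · rw [h] at hup hvp
      exact absurd (hup.trans hvp.symm) huv
    · exact h
  obtain ⟨a, b, hab, hp⟩ := hE _ hpE
  have hpuv : p.1 = ({u, v} : Set V) := by
    rw [hp] at hup hvp ⊢
    rcases hup with rfl | rfl <;> rcases hvp with rfl | rfl
    · exact absurd rfl huv
    · rfl
    · exact Set.pair_comm _ _
    · exact absurd rfl huv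
  exact ⟨p, hpuv, hpE, rfl⟩

omit [Fintype V] in
lemma pg_Ici_joinirr (p : PGuniv V E) : JoinIrrUp E (Set.Ici p) := by
  constructor
  · exact Set.nonempty_iff_ne_empty.mp ⟨p, Set.self_mem_Ici⟩
  · intro A B hA hB hcup
    have hp : p ∈ A ∪ B := hcup ▸ Set.self_mem_Ici
    rcases hp with h | h
    · left
      refine Set.Subset.antisymm (fun q hq => hA hq h) ?_
      rw [hcup]; exact Set.subset_union_left
    · right
      refine Set.Subset.antisymm (fun q hq => hB hq h) ?_
      rw [hcup]; exact Set.subset_union_right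

end Aux

/-- For distinct vertices `u, v`, `{u, v}` is an edge of `G` iff in `Up(P_G)` there is
a unique join-irreducible upset strictly above both `↑{u}` and `↑{v}`. -/
theorem stmt14 (V : Type*) [Fintype V] (E : Set (Set V))
    (hE : ∀ s ∈ E, ∃ u v : V, u ≠ v ∧ s = {u, v})
    (u v : V) (huv : u ≠ v) :
    ({u, v} : Set V) ∈ E ↔
      ∃! X : Set (PGuniv V E),
        IsUpperSet X ∧ JoinIrrUp E X ∧
          Set.Ici (vtx E u) ⊂ X ∧ Set.Ici (vtx E v) ⊂ X := by
  constructor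
  · intro hmem
    set e : PGuniv V E := ⟨{u, v}, Or.inr (Or.inr hmem)⟩ with he
    have hle_u : e ≤ vtx E u := by
      show (vtx E u).1 ⊆ e.1
      simp [vtx, he, Set.singleton_subset_iff]
    have hle_v : e ≤ vtx E v := by
      show (vtx E v).1 ⊆ e.1
      simp [vtx, he, Set.singleton_subset_iff]
    have hne_u : e ≠ vtx E u := by
      intro h
      have : v ∈ ({u} : Set V) := by
        rw [show ({u} : Set V) = e.1 from by rw [h]; rfl]
        simp [he]
      exact huv this.symm
    have hne_v : e ≠ vtx E v := by
      intro h
      have : u ∈ ({v} : Set V) := by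
        rw [show ({v} : Set V) = e.1 from by rw [h]; rfl]
        simp [he]
      exact huv this
    have hsub_u : Set.Ici (vtx E u) ⊂ Set.Ici e := by
      constructor
      · exact fun x hx => le_trans hle_u hx
      · intro hcontra
        have : vtx E u ≤ e := hcontra Set.self_mem_Ici
        exact hne_u (le_antisymm hle_u this)
    have hsub_v : Set.Ici (vtx E v) ⊂ Set.Ici e := by
      constructor
      · exact fun x hx => le_trans hle_v hx
      · intro hcontra
        have : vtx E v ≤ e := hcontra Set.self_mem_Ici
        exact hne_v (le_antisymm hle_v this)
    refine ⟨Set.Ici e, ⟨isUpperSet_Ici e, pg_Ici_joinirr e, hsub_u, hsub_v⟩, ?_⟩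
    rintro Y ⟨hYup, hYirr, hYu, hYv⟩
    have hu' : vtx E u ∈ Y := hYu.1 Set.self_mem_Ici
    have hv' : vtx E v ∈ Y := hYv.1 Set.self_mem_Ici
    obtain ⟨p, hp1, -, hYeq⟩ := pg_char hE huv Y hYup hYirr hu' hv'
    have : p = e := Subtype.ext (by rw [hp1, he])
    rw [hYeq, this]
  · rintro ⟨X, ⟨hXup, hXirr, hXu, hXv⟩, -⟩
    have hu' : vtx E u ∈ X := hXu.1 Set.self_mem_Ici
    have hv' : vtx E v ∈ X := hXv.1 Set.self_mem_Ici
    obtain ⟨p, hp1, hpE, -⟩ := pg_char hE huv X hXup hXirr hu' hv'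
    exact hp1 ▸ hpE
end

section
/- Every finite p-algebra A is isomorphic to the p-algebra Up(J(A)), where J(A) is the set of join-irreducible elements of A equipped with the dual of the order inherited from A, and Up denotes the p-algebra of upsets with X* = complement of the downward closure of X. The isomorphism sends a ∈ A to {j ∈ J(A) : j ≤_A a}. -/
/-- An element of a lattice with bottom is join-irreducible if it is nonzero and is
not a join of two elements unless it equals one of them. -/
def JoinIrrEl {A : Type*} [Lattice A] [OrderBot A] (j : A) : Prop :=
  j ≠ ⊥ ∧ ∀ a b : A, j = a ⊔ b → j = a ∨ j = b

/-- The poset `J(A)` of join-irreducible elements of `A`, under the dual of the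
order inherited from `A`. -/
def JPoset (A : Type*) [Lattice A] [OrderBot A] := {j : A // JoinIrrEl j}

instance (A : Type*) [Lattice A] [OrderBot A] : PartialOrder (JPoset A) where
  le j k := k.1 ≤ j.1
  le_refl _ := le_refl _
  le_trans _ _ _ h1 h2 := le_trans h2 h1
  le_antisymm _ _ h1 h2 := Subtype.ext (le_antisymm h2 h1)

/-- The representation map `a ↦ {j ∈ J(A) : j ≤_A a}`. -/
def repMap (A : Type*) [Lattice A] [OrderBot A] (a : A) : Set (JPoset A) :=
  {j : JPoset A | j.1 ≤ a}

section Aux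

variable {A : Type*} [DistribLattice A] [BoundedOrder A] [Fintype A]

open Classical

lemma jirr_prime {j : A} (hj : JoinIrrEl j) {b c : A} (h : j ≤ b ⊔ c) :
    j ≤ b ∨ j ≤ c := by
  have hj2 : j = (j ⊓ b) ⊔ (j ⊓ c) := by
    rw [← inf_sup_left]; exact (inf_eq_left.2 h).symm
  rcases hj.2 _ _ hj2 with h1 | h1
  · exact Or.inl (h1 ▸ inf_le_right)
  · exact Or.inr (h1 ▸ inf_le_right)

lemma jirr_prime_sup {j : A} (hj : JoinIrrEl j) {s : Finset A}
    (h : j ≤ s.sup id) : ∃ i ∈ s, j ≤ i := by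
  classical
  induction s using Finset.induction with
  | empty => simp at h; exact absurd h hj.1
  | insert _ _ hx ih =>
    rw [Finset.sup_insert] at h
    rcases jirr_prime hj h with h1 | h1
    · exact ⟨_, Finset.mem_insert_self _ _, h1⟩
    · obtain ⟨i, hi, hji⟩ := ih h1
      exact ⟨i, Finset.mem_insert_of_mem hi, hji⟩

noncomputable def jset (a : A) : Finset A :=
  Finset.univ.filter (fun j => JoinIrrEl j ∧ j ≤ a)

lemma sup_jset (a : A) : (jset a).sup id = a := by
  classical
  apply le_antisymm
  · exact Finset.sup_le fun j hj => (Finset.mem_filter.1 hj).2.2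
  · induction a using WellFoundedLT.induction with
    | _ a ih =>
      by_cases hb : a = ⊥
      · simp [hb]
      by_cases hi : JoinIrrEl a
      · exact Finset.le_sup (f := id) (Finset.mem_filter.2 ⟨Finset.mem_univ _, hi, le_rfl⟩)
      · simp only [JoinIrrEl, not_and, not_forall] at hi
        obtain ⟨b, c, habc, hab⟩ := hi hb
        push_neg at hab
        have hba : b < a := lt_of_le_of_ne (habc ▸ le_sup_left) (fun h => hab.1 h.symm)
        have hca : c < a := lt_of_le_of_ne (habc ▸ le_sup_right) (fun h => hab.2 h.symm)
        have hmb : jset b ⊆ jset a := fun j hj => by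
          simp only [jset, Finset.mem_filter] at *
          exact ⟨hj.1, hj.2.1, hj.2.2.trans hba.le⟩
        have hmc : jset c ⊆ jset a := fun j hj => by
          simp only [jset, Finset.mem_filter] at *
          exact ⟨hj.1, hj.2.1, hj.2.2.trans hca.le⟩
        calc a = b ⊔ c := habc
        _ ≤ (jset b).sup id ⊔ (jset c).sup id := sup_le_sup (ih b hba) (ih c hca)
        _ ≤ (jset a).sup id := sup_le (Finset.sup_mono hmb) (Finset.sup_mono hmc)

lemma exists_jirr_le {a : A} (ha : a ≠ ⊥) : ∃ j : A, JoinIrrEl j ∧ j ≤ a := by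
  classical
  by_contra h
  push_neg at h
  have : jset a = ∅ := by
    apply Finset.eq_empty_of_forall_notMem
    intro j hj
    rw [jset, Finset.mem_filter] at hj
    exact absurd hj.2.2 (h j hj.2.1)
  have h2 := sup_jset a
  rw [this, Finset.sup_empty] at h2
  exact ha h2.symm

end Aux

/-- Every finite p-algebra `A` is isomorphic to `Up(J(A))` via `a ↦ {j ∈ J(A) : j ≤ a}`:
the map is a bijection onto the upsets of `J(A)` carrying `⊓, ⊔, ⊥, ⊤` and the
pseudo-complement to `∩, ∪, ∅, univ` and `X ↦ (↓X)ᶜ`. -/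
theorem stmt15 (A : Type*) [DistribLattice A] [BoundedOrder A] [Fintype A]
    (star : A → A) (hstar : ∀ x y : A, x ⊓ y = ⊥ ↔ y ≤ star x) :
    (∀ a : A, IsUpperSet (repMap A a)) ∧
    Function.Injective (repMap A) ∧
    (∀ X : Set (JPoset A), IsUpperSet X → ∃ a : A, repMap A a = X) ∧
    (∀ a b : A, repMap A (a ⊓ b) = repMap A a ∩ repMap A b) ∧
    (∀ a b : A, repMap A (a ⊔ b) = repMap A a ∪ repMap A b) ∧
    repMap A ⊥ = (∅ : Set (JPoset A)) ∧
    repMap A ⊤ = (Set.univ : Set (JPoset A)) ∧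
    (∀ a : A, repMap A (star a) =
      (↑(lowerClosure (repMap A a)) : Set (JPoset A))ᶜ) := by
  classical
  refine ⟨?_, ?_, ?_, ?_, ?_, ?_, ?_, ?_⟩
  · -- upper set
    intro a j k hjk hj
    exact le_trans hjk hj
  · -- injective
    intro a b hab
    have key : jset a = jset b := by
      ext j
      simp only [jset, Finset.mem_filter, Finset.mem_univ, true_and]
      constructor
      · rintro ⟨hj, hja⟩
        have : (⟨j, hj⟩ : JPoset A) ∈ repMap A b := hab ▸ hja
        exact ⟨hj, this⟩
      · rintro ⟨hj, hjb⟩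
        have : (⟨j, hj⟩ : JPoset A) ∈ repMap A a := hab.symm ▸ hjb
        exact ⟨hj, this⟩
    rw [← sup_jset a, ← sup_jset b, key]
  · -- surjective onto upsets
    intro X hX
    classical
    haveI : Fintype (JPoset A) := Fintype.ofInjective (fun j : JPoset A => j.1)
      (fun a b h => Subtype.ext h)
    refine ⟨(Finset.univ.filter (fun j : JPoset A => j ∈ X)).sup (fun j => j.1), ?_⟩
    ext k
    simp only [repMap, Set.mem_setOf_eq]
    constructor
    · intro hk
      have hk' : k.1 ≤ ((Finset.univ.filter (fun j : JPoset A => j ∈ X)).image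
          (fun j => j.1)).sup id := by
        rwa [Finset.sup_image]
      obtain ⟨i, hi, hki⟩ := jirr_prime_sup k.2 hk'
      simp only [Finset.mem_image, Finset.mem_filter, Finset.mem_univ, true_and] at hi
      obtain ⟨j, hjX, hji⟩ := hi
      exact hX (show j ≤ k by show k.1 ≤ j.1; rw [hji]; exact hki) hjX
    · intro hk
      exact Finset.le_sup (Finset.mem_filter.2 ⟨Finset.mem_univ _, hk⟩)
  · intro a b; ext j; simp [repMap, le_inf_iff]
  · -- join
    intro a b; ext j
    simp only [repMap, Set.mem_setOf_eq, Set.mem_union]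
    constructor
    · exact fun h => jirr_prime j.2 h
    · rintro (h | h)
      · exact h.trans le_sup_left
      · exact h.trans le_sup_right
  · ext j; simp [repMap]; exact j.2.1
  · ext j; simp [repMap]
  · -- star
    intro a
    ext j
    simp only [repMap, Set.mem_setOf_eq, Set.mem_compl_iff, SetLike.mem_coe,
      mem_lowerClosure]
    constructor
    · rintro hj ⟨k, hk, hkj⟩
      -- hkj : j ≤ k, i.e. k.1 ≤ j.1 ; hk : k.1 ≤ a
      have h1 : k.1 ≤ a ⊓ star a := le_inf hk (le_trans hkj hj)
      have h2 : a ⊓ star a = ⊥ := (hstar a (star a)).2 le_rfl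
      exact k.2.1 (le_bot_iff.1 (h2 ▸ h1))
    · intro h
      rw [← hstar]
      by_contra hne
      obtain ⟨i, hi, hia⟩ := exists_jirr_le hne
      exact h ⟨⟨i, hi⟩, le_trans hia inf_le_left,
        show i ≤ j.1 from le_trans hia inf_le_right⟩
end
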